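/- (Theorem 3.5, case 0 < γ < 1: unconditional stability of the two-dimensional implicit scheme.) Let γ ∈ (0,1), α, β ∈ (1,2], integers N_x, N_y ≥ 2 and N_t ≥ 1, reals τ, Δx, Δy > 0, and nonnegative reals c_{i,j,k}, d_{i,j,k} (1 ≤ i ≤ N_x-1, 1 ≤ j ≤ N_y-1, 1 ≤ k ≤ N_t). Set ω'_{i,j,k} = -Γ(2-γ)·τ^γ·κ_α·c_{i,j,k}/(Γ(4-α)·(Δx)^α) ≥ 0 and ω''_{i,j,k} = -Γ(2-γ)·τ^γ·κ_β·d_{i,j,k}/(Γ(4-β)·(Δy)^β) ≥ 0. Suppose real numbers ε^k_{i,j} (0 ≤ i ≤ N_x, 0 ≤ j ≤ N_y, 0 ≤ k ≤ N_t) satisfy ε^k_{i,j} = 0 whenever i ∈ {0, N_x} or j ∈ {0, N_y} and 1 ≤ k ≤ N_t, and for all interior (i,j) (1 ≤ i ≤ N_x-1, 1 ≤ j ≤ N_y-1) and 0 ≤ k ≤ N_t - 1: (1 - ω'_{i,j,k+1}·g^{α,N_x}_{i,i} - ω''_{i,j,k+1}·g^{β,N_y}_{j,j})·ε^{k+1}_{i,j}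 - ω'_{i,j,k+1}·Σ_{m=0, m≠i}^{N_x} g^{α,N_x}_{i,m}·ε^{k+1}_{m,j} - ω''_{i,j,k+1}·Σ_{m=0, m≠j}^{N_y} g^{β,N_y}_{j,m}·ε^{k+1}_{i,m} = Σ_{s=0}^{k-1}(l_s - l_{s+1})·ε^{k-s}_{i,j} + l_k·ε^0_{i,j}. Then for every 0 ≤ k ≤ N_t: max_{i,j} |ε^k_{i,j}| ≤ max_{i,j} |ε^0_{i,j}|. -/

import Mathlib

/-- The coefficients `a^ν_{j,m}` of the second-order discretization of the left
Riemann–Liouville fractional derivative. All powers are real powers. -/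
noncomputable def aCoef (ν : ℝ) (j m : ℕ) : ℝ :=
  if m = j then 1
  else if m = 0 then ((j : ℝ) - 1) ^ (3 - ν) - (j : ℝ) ^ (2 - ν) * ((j : ℝ) - 3 + ν)
  else ((j : ℝ) - (m : ℝ) + 1) ^ (3 - ν) - 2 * ((j : ℝ) - (m : ℝ)) ^ (3 - ν)
    + ((j : ℝ) - (m : ℝ) - 1) ^ (3 - ν)

/-- The coefficients `b^ν_{j,m}` of the second-order discretization of the right
Riemann–Liouville fractional derivative on a grid with `N` subintervals. -/
noncomputable def bCoef (ν : ℝ) (N j m : ℕ) : ℝ :=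
  if m = j then 1
  else if m = N then (3 - ν - (N : ℝ) + (j : ℝ)) * ((N : ℝ) - (j : ℝ)) ^ (2 - ν)
    + ((N : ℝ) - (j : ℝ) - 1) ^ (3 - ν)
  else ((m : ℝ) - (j : ℝ) + 1) ^ (3 - ν) - 2 * ((m : ℝ) - (j : ℝ)) ^ (3 - ν)
    + ((m : ℝ) - (j : ℝ) - 1) ^ (3 - ν)

/-- The coefficients `p^ν_{i,m}` (left-derivative part), for `1 ≤ i ≤ N-1`. -/
noncomputable def pCoef (ν : ℝ) (i m : ℕ) : ℝ :=
  if m < i then aCoef ν (i - 1) m - 2 * aCoef ν i m + aCoef ν (i + 1) m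
  else if m = i then -2 * aCoef ν i i + aCoef ν (i + 1) i
  else if m = i + 1 then aCoef ν (i + 1) (i + 1)
  else 0

/-- The coefficients `q^ν_{i,m}` (right-derivative part), for `1 ≤ i ≤ N-1`. -/
noncomputable def qCoef (ν : ℝ) (N i m : ℕ) : ℝ :=
  if m + 1 < i then 0
  else if m + 1 = i then bCoef ν N (i - 1) (i - 1)
  else if m = i then -2 * bCoef ν N i i + bCoef ν N (i - 1) i
  else bCoef ν N (i - 1) m - 2 * bCoef ν N i m + bCoef ν N (i + 1) m

/-- The Riesz-derivative difference coefficients `g^{ν,N}_{i,m} = p^ν_{i,m} + q^ν_{i,m}`. -/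
noncomputable def gCoef (ν : ℝ) (N i m : ℕ) : ℝ := pCoef ν i m + qCoef ν N i m

/-- The L1 coefficients `l_s = (s+1)^(1-γ) - s^(1-γ)` of the Caputo discretization. -/
noncomputable def lCoef (γ : ℝ) (s : ℕ) : ℝ := ((s : ℝ) + 1) ^ (1 - γ) - (s : ℝ) ^ (1 - γ)

/-- The Riesz constant `κ_ν = 1 / (2 cos(νπ/2))`. -/
noncomputable def kappa (ν : ℝ) : ℝ := 1 / (2 * Real.cos (ν * Real.pi / 2))

/-- The maximum of `|v i|` over `0 ≤ i ≤ N`. -/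
noncomputable def maxAbs (N : ℕ) (v : ℕ → ℝ) : ℝ :=
  (Finset.range (N + 1)).sup' Finset.nonempty_range_add_one fun i => |v i|

/-- The maximum of `|v i j|` over `0 ≤ i ≤ Nx`, `0 ≤ j ≤ Ny`. -/
noncomputable def maxAbs2 (Nx Ny : ℕ) (v : ℕ → ℕ → ℝ) : ℝ :=
  ((Finset.range (Nx + 1)) ×ˢ (Finset.range (Ny + 1))).sup'
    (Finset.nonempty_range_add_one.product Finset.nonempty_range_add_one) fun p => |v p.1 p.2|


section AuxStability

open Real Set

noncomputable def dd (r x : ℝ) : ℝ := (x+1)^r - 2*x^r + (x-1)^r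

lemma hasDerivAt_shift_rpow (p c x : ℝ) (h : x + c ≠ 0) :
    HasDerivAt (fun y : ℝ => (y + c) ^ p) (p * (x + c) ^ (p - 1)) x := by
  have h1 : HasDerivAt (fun y : ℝ => y + c) 1 x := (hasDerivAt_id x).add_const c
  have := (Real.hasDerivAt_rpow_const (x := x + c) (p := p) (Or.inl h)).comp x h1
  simp only [mul_one] at this
  exact this

lemma hasDerivAt_sub_one_rpow (p x : ℝ) (h : x - 1 ≠ 0) :
    HasDerivAt (fun y : ℝ => (y - 1) ^ p) (p * (x - 1) ^ (p - 1)) x := by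
  have := hasDerivAt_shift_rpow p (-1) x (by simpa [sub_eq_add_neg] using h)
  simpa [sub_eq_add_neg] using this

lemma hasDerivAt_dd (r : ℝ) {x : ℝ} (hx : 1 < x) :
    HasDerivAt (dd r) (r * ((x+1)^(r-1) - 2*x^(r-1) + (x-1)^(r-1))) x := by
  have A := hasDerivAt_shift_rpow r 1 x (by linarith)
  have B := Real.hasDerivAt_rpow_const (x := x) (p := r) (Or.inl (by linarith))
  have C := hasDerivAt_sub_one_rpow r x (by intro h; linarith [sub_eq_zero.mp h])
  have := (A.sub (B.const_mul 2)).add C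
  refine this.congr_deriv ?_
  ring

lemma hasDerivAt_dd1 (r : ℝ) {x : ℝ} (hx : 1 < x) :
    HasDerivAt (fun y : ℝ => r * ((y+1)^(r-1) - 2*y^(r-1) + (y-1)^(r-1)))
      (r * ((r-1) * ((x+1)^(r-2) - 2*x^(r-2) + (x-1)^(r-2)))) x := by
  have A := hasDerivAt_shift_rpow (r-1) 1 x (by linarith)
  have B := Real.hasDerivAt_rpow_const (x := x) (p := r-1) (Or.inl (by linarith))
  have C := hasDerivAt_sub_one_rpow (r-1) x (by intro h; linarith [sub_eq_zero.mp h])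
  have := ((A.sub (B.const_mul 2)).add C).const_mul r
  refine this.congr_deriv ?_
  have e : r - 1 - 1 = r - 2 := by ring
  rw [e]; ring

lemma continuousOn_dd (r : ℝ) (hr : 0 < r) : ContinuousOn (dd r) (Ici 1) := by
  have h1 : ∀ c : ℝ, Continuous fun y : ℝ => y + c := fun c => continuous_id.add continuous_const
  have key : ∀ c : ℝ, ContinuousOn (fun y : ℝ => (y + c) ^ r) (Ici 1) := by
    intro c x hx
    exact (ContinuousAt.comp (g := fun y : ℝ => y ^ r) (f := fun y : ℝ => y + c)
      (Real.continuousAt_rpow_const (x + c) r (Or.inr hr.le))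
      ((h1 c).continuousAt)).continuousWithinAt
  have k1 := key 1
  have k0 : ContinuousOn (fun y : ℝ => y ^ r) (Ici 1) := by
    simpa using key 0
  have km : ContinuousOn (fun y : ℝ => (y - 1) ^ r) (Ici 1) := by
    simpa [sub_eq_add_neg] using key (-1)
  refine ((k1.sub (k0.const_smul (2:ℝ))).add km).congr (fun x _ => ?_)
  simp only [dd, smul_eq_mul, Pi.add_apply, Pi.sub_apply, Pi.smul_apply]

lemma convexOn_midpoint {s : Set ℝ} {f : ℝ → ℝ} (h : ConvexOn ℝ s f) {a b : ℝ}
    (ha : a ∈ s) (hb : b ∈ s) : f ((a+b)/2) ≤ (f a + f b)/2 := by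
  have := h.2 ha hb (by norm_num : (0:ℝ) ≤ 1/2) (by norm_num : (0:ℝ) ≤ 1/2) (by norm_num)
  simp only [smul_eq_mul] at this
  calc f ((a+b)/2) = f (1/2*a + 1/2*b) := by ring_nf
    _ ≤ 1/2 * f a + 1/2 * f b := this
    _ = (f a + f b)/2 := by ring

lemma concaveOn_midpoint {s : Set ℝ} {f : ℝ → ℝ} (h : ConcaveOn ℝ s f) {a b : ℝ}
    (ha : a ∈ s) (hb : b ∈ s) : (f a + f b)/2 ≤ f ((a+b)/2) := by
  have := h.2 ha hb (by norm_num : (0:ℝ) ≤ 1/2) (by norm_num : (0:ℝ) ≤ 1/2) (by norm_num)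
  simp only [smul_eq_mul] at this
  calc (f a + f b)/2 = 1/2 * f a + 1/2 * f b := by ring
    _ ≤ f (1/2*a + 1/2*b) := this
    _ = f ((a+b)/2) := by ring_nf

/-- `t ↦ t^c` is convex on `(0,∞)` for `c ≤ 0`. -/
lemma convexOn_rpow_nonpos {c : ℝ} (hc : c ≤ 0) :
    ConvexOn ℝ (Ioi (0:ℝ)) fun x : ℝ => x ^ c := by
  have hint : interior (Ioi (0:ℝ)) = Ioi 0 := isOpen_Ioi.interior_eq
  refine convexOn_of_hasDerivWithinAt2_nonneg (convex_Ioi 0) ?_ (f' := fun x => c * x^(c-1))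
    (f'' := fun x => c * ((c-1) * x^(c-2))) ?_ ?_ ?_
  · intro x hx
    exact ((Real.continuousAt_rpow_const x c (Or.inl (ne_of_gt hx)))).continuousWithinAt
  · intro x hx
    rw [hint] at hx
    exact (Real.hasDerivAt_rpow_const (x := x) (p := c) (Or.inl (ne_of_gt hx))).hasDerivWithinAt
  · intro x hx
    rw [hint] at hx
    have := ((Real.hasDerivAt_rpow_const (x := x) (p := c-1)
      (Or.inl (ne_of_gt hx))).const_mul c)
    have e : c - 1 - 1 = c - 2 := by ring
    rw [e] at this
    exact this.hasDerivWithinAt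
  · intro x hx
    rw [hint] at hx
    have h1 : 0 ≤ c * (c-1) := by nlinarith
    have h2 : (0:ℝ) < x ^ (c-2) := Real.rpow_pos_of_pos hx _
    have : 0 ≤ c * (c-1) * x ^ (c-2) := mul_nonneg h1 h2.le
    simpa [mul_assoc] using this

section DD
variable {r : ℝ} (hr1 : 1 ≤ r) (hr2 : r ≤ 2)

include hr1 in
lemma dd_nonneg {x : ℝ} (hx : 1 ≤ x) : 0 ≤ dd r x := by
  have h := convexOn_midpoint (convexOn_rpow hr1) (a := x - 1) (b := x + 1)
    (by simp; linarith) (by simp; linarith)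
  have e : (x - 1 + (x + 1))/2 = x := by ring
  rw [e] at h
  simp only [dd]
  linarith

include hr1 hr2 in
lemma dd_antitoneOn : AntitoneOn (dd r) (Ici 1) := by
  have hint : interior (Ici (1:ℝ)) = Ioi 1 := interior_Ici
  refine antitoneOn_of_hasDerivWithinAt_nonpos (convex_Ici 1)
    (continuousOn_dd r (by linarith))
    (f' := fun x => r * ((x+1)^(r-1) - 2*x^(r-1) + (x-1)^(r-1))) ?_ ?_
  · intro x hx
    rw [hint] at hx
    exact (hasDerivAt_dd r hx).hasDerivWithinAt
  · intro x hx
    rw [hint] at hx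
    have hconc := Real.concaveOn_rpow (p := r - 1) (by linarith) (by linarith)
    have h := concaveOn_midpoint hconc (a := x - 1) (b := x + 1)
      (by simp; linarith [mem_Ioi.mp hx]) (by simp; linarith [mem_Ioi.mp hx])
    have e : (x - 1 + (x + 1))/2 = x := by ring
    rw [e] at h
    have h2 : (x+1)^(r-1) - 2*x^(r-1) + (x-1)^(r-1) ≤ 0 := by linarith
    have h3 : 0 ≤ r := by linarith
    exact mul_nonpos_of_nonneg_of_nonpos h3 h2

include hr1 hr2 in
lemma dd_convexOn : ConvexOn ℝ (Ici 1) (dd r) := by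
  have hint : interior (Ici (1:ℝ)) = Ioi 1 := interior_Ici
  refine convexOn_of_hasDerivWithinAt2_nonneg (convex_Ici 1)
    (continuousOn_dd r (by linarith))
    (f' := fun x => r * ((x+1)^(r-1) - 2*x^(r-1) + (x-1)^(r-1)))
    (f'' := fun x => r * ((r-1) * ((x+1)^(r-2) - 2*x^(r-2) + (x-1)^(r-2)))) ?_ ?_ ?_
  · intro x hx
    rw [hint] at hx
    exact (hasDerivAt_dd r hx).hasDerivWithinAt
  · intro x hx
    rw [hint] at hx
    exact (hasDerivAt_dd1 r hx).hasDerivWithinAt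
  · intro x hx
    rw [hint] at hx
    have hx' : (1:ℝ) < x := hx
    have hcvx := convexOn_rpow_nonpos (c := r - 2) (by linarith)
    have h := convexOn_midpoint hcvx (a := x - 1) (b := x + 1)
      (by simp; linarith) (by simp; linarith)
    have e : (x - 1 + (x + 1))/2 = x := by ring
    rw [e] at h
    have h2 : 0 ≤ (x+1)^(r-2) - 2*x^(r-2) + (x-1)^(r-2) := by linarith
    have h3 : 0 ≤ r * (r-1) := by nlinarith
    calc (0:ℝ) = r * (r-1) * 0 := by ring
    _ ≤ r * (r-1) * ((x+1)^(r-2) - 2*x^(r-2) + (x-1)^(r-2)) := by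
        exact mul_le_mul_of_nonneg_left h2 h3
    _ = r * ((r-1) * ((x+1)^(r-2) - 2*x^(r-2) + (x-1)^(r-2))) := by ring

include hr1 hr2 in
lemma dd_second_diff_nonneg {x : ℝ} (hx : 2 ≤ x) :
    0 ≤ dd r (x - 1) - 2 * dd r x + dd r (x + 1) := by
  have h := convexOn_midpoint (dd_convexOn hr1 hr2) (a := x - 1) (b := x + 1)
    (by simp; linarith) (by simp; linarith)
  have e : (x - 1 + (x + 1))/2 = x := by ring
  rw [e] at h
  linarith

include hr1 in
lemma dd_one_eq : dd r 1 = (2:ℝ)^r - 2 := by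
  have h0 : (0:ℝ)^r = 0 := Real.zero_rpow (by linarith)
  have h1 : (1:ℝ)^r = 1 := Real.one_rpow r
  simp only [dd]
  norm_num [h0, h1]

lemma dd_two_eq : dd r 2 = (3:ℝ)^r - 2*(2:ℝ)^r + 1 := by
  have h1 : (1:ℝ)^r = 1 := Real.one_rpow r
  simp only [dd]
  norm_num [h1]

lemma two_rpow_le_four (hr2 : r ≤ 2) : (2:ℝ)^r ≤ 4 := by
  have := Real.rpow_le_rpow_of_exponent_le (by norm_num : (1:ℝ) ≤ 2) hr2
  have e : (2:ℝ)^(2:ℝ) = 4 := by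
    rw [show (2:ℝ) = ((2:ℕ):ℝ) by norm_num, Real.rpow_natCast]; norm_num
  linarith

include hr1 hr2 in
lemma K1_ineq : 0 ≤ (3:ℝ)^r - 4*(2:ℝ)^r + 7 := by
  set F : ℝ → ℝ := fun x => 4*(2:ℝ)^x - (3:ℝ)^x with hF
  have hmono : MonotoneOn F (Icc 1 2) := by
    have hint : interior (Icc (1:ℝ) 2) = Ioo 1 2 := interior_Icc
    refine monotoneOn_of_hasDerivWithinAt_nonneg (convex_Icc 1 2) ?_
      (f' := fun x => 4*((2:ℝ)^x * Real.log 2) - (3:ℝ)^x * Real.log 3) ?_ ?_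
    · intro x _
      have c2 : ContinuousAt (fun y : ℝ => (2:ℝ) ^ y) x :=
        Real.continuousAt_const_rpow (by norm_num)
      have c3 : ContinuousAt (fun y : ℝ => (3:ℝ) ^ y) x :=
        Real.continuousAt_const_rpow (by norm_num)
      have : ContinuousAt (fun y : ℝ => 4*(2:ℝ)^y - (3:ℝ)^y) x :=
        ContinuousAt.sub (continuousAt_const.mul c2) c3
      exact this.continuousWithinAt
    · intro x hx
      have h2 := (Real.hasStrictDerivAt_const_rpow (by norm_num : (0:ℝ) < 2) x).hasDerivAt
      have h3 := (Real.hasStrictDerivAt_const_rpow (by norm_num : (0:ℝ) < 3) x).hasDerivAt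
      exact ((h2.const_mul 4).sub h3).hasDerivWithinAt
    · intro x hx
      rw [hint] at hx
      obtain ⟨hx1, hx2⟩ := hx
      have key : (3:ℝ)^x * Real.log 3 ≤ 4*((2:ℝ)^x * Real.log 2) := by
        have e3 : (3:ℝ)^x = (2:ℝ)^x * (3/2:ℝ)^x := by
          rw [← Real.mul_rpow (by norm_num) (by norm_num)]; norm_num
        have hb : (3/2:ℝ)^x ≤ (3/2:ℝ)^(2:ℝ) :=
          Real.rpow_le_rpow_of_exponent_le (by norm_num) hx2.le
        have e94 : (3/2:ℝ)^(2:ℝ) = 9/4 := by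
          rw [show (2:ℝ) = ((2:ℕ):ℝ) by norm_num, Real.rpow_natCast]; norm_num
        have hlog : (9/4:ℝ) * Real.log 3 ≤ 4 * Real.log 2 := by
          have h1 : Real.log (3^(9:ℕ)) ≤ Real.log (2^(16:ℕ)) := by
            apply Real.log_le_log (by positivity)
            norm_num
          rw [Real.log_pow, Real.log_pow] at h1
          push_cast at h1
          linarith
        have hl3 : 0 ≤ Real.log 3 := Real.log_nonneg (by norm_num)
        have h2x : (0:ℝ) < (2:ℝ)^x := Real.rpow_pos_of_pos (by norm_num) x
        calc (3:ℝ)^x * Real.log 3 = (2:ℝ)^x * ((3/2:ℝ)^x * Real.log 3) := by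
              rw [e3]; ring
        _ ≤ (2:ℝ)^x * ((9/4) * Real.log 3) := by
              apply mul_le_mul_of_nonneg_left _ h2x.le
              exact mul_le_mul_of_nonneg_right (e94 ▸ hb) hl3
        _ ≤ (2:ℝ)^x * (4 * Real.log 2) := mul_le_mul_of_nonneg_left hlog h2x.le
        _ = 4*((2:ℝ)^x * Real.log 2) := by ring
      show 0 ≤ 4*((2:ℝ)^x * Real.log 2) - (3:ℝ)^x * Real.log 3
      linarith
  have hFr := hmono (Set.mem_Icc.mpr ⟨hr1, hr2⟩) (Set.mem_Icc.mpr ⟨by norm_num, le_refl 2⟩) hr2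
  have e2 : (2:ℝ)^(2:ℝ) = 4 := by
    rw [show (2:ℝ) = ((2:ℕ):ℝ) by norm_num, Real.rpow_natCast]; norm_num
  have e3 : (3:ℝ)^(2:ℝ) = 9 := by
    rw [show (2:ℝ) = ((2:ℕ):ℝ) by norm_num, Real.rpow_natCast]; norm_num
  simp only [hF] at hFr
  rw [e2, e3] at hFr
  linarith

end DD

section Entries
variable (ν : ℝ) {N i j m : ℕ}

lemma aCoef_diag (j : ℕ) : aCoef ν j j = 1 := by simp [aCoef]

lemma aCoef_mid (h1 : 1 ≤ m) (h2 : m < j) : aCoef ν j m = dd (3-ν) ((j:ℝ) - m) := by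
  unfold aCoef dd
  rw [if_neg (by omega), if_neg (by omega)]

lemma bCoef_diag (j : ℕ) : bCoef ν N j j = 1 := by simp [bCoef]

lemma bCoef_mid (h1 : j < m) (h2 : m < N) : bCoef ν N j m = dd (3-ν) ((m:ℝ) - j) := by
  unfold bCoef dd
  rw [if_neg (by omega), if_neg (by omega)]

lemma pCoef_far (h1 : 1 ≤ m) (h2 : m + 2 ≤ i) :
    pCoef ν i m = dd (3-ν) ((i:ℝ)-m-1) - 2*dd (3-ν) ((i:ℝ)-m) + dd (3-ν) ((i:ℝ)-m+1) := by
  unfold pCoef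
  rw [if_pos (by omega : m < i)]
  rw [aCoef_mid ν h1 (by omega), aCoef_mid ν h1 (by omega), aCoef_mid ν h1 (by omega)]
  rw [show ((i-1:ℕ):ℝ) - m = (i:ℝ)-m-1 by rw [Nat.cast_sub (by omega : 1 ≤ i)]; ring,
      show ((i+1:ℕ):ℝ) - m = (i:ℝ)-m+1 by push_cast; ring]

lemma pCoef_sub (m : ℕ) (h1 : 1 ≤ m) :
    pCoef ν (m+1) m = 1 - 2*dd (3-ν) 1 + dd (3-ν) 2 := by
  unfold pCoef
  rw [if_pos (by omega : m < m + 1)]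
  rw [show m + 1 - 1 = m by omega, aCoef_diag,
      aCoef_mid ν h1 (by omega), aCoef_mid ν h1 (by omega)]
  rw [show ((m+1:ℕ):ℝ) - m = 1 by push_cast; ring,
      show ((m+1+1:ℕ):ℝ) - m = 2 by push_cast; ring]

lemma pCoef_diag (i : ℕ) (h : 1 ≤ i) : pCoef ν i i = -2 + dd (3-ν) 1 := by
  unfold pCoef
  rw [if_neg (by omega), if_pos rfl]
  rw [aCoef_diag, aCoef_mid ν h (by omega)]
  rw [show ((i+1:ℕ):ℝ) - i = 1 by push_cast; ring]
  ring

lemma pCoef_super (i : ℕ) : pCoef ν i (i+1) = 1 := by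
  unfold pCoef
  rw [if_neg (by omega), if_neg (by omega), if_pos rfl, aCoef_diag]

lemma pCoef_ge (h : i + 2 ≤ m) : pCoef ν i m = 0 := by
  unfold pCoef
  rw [if_neg (by omega), if_neg (by omega), if_neg (by omega)]

lemma qCoef_lt (h : m + 1 < i) : qCoef ν N i m = 0 := by
  unfold qCoef
  rw [if_pos h]

lemma qCoef_sub (m : ℕ) : qCoef ν N (m+1) m = 1 := by
  unfold qCoef
  rw [if_neg (by omega), if_pos rfl, show m + 1 - 1 = m by omega, bCoef_diag]

lemma qCoef_diag (h1 : 1 ≤ i) (h2 : i < N) : qCoef ν N i i = -2 + dd (3-ν) 1 := by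
  unfold qCoef
  rw [if_neg (by omega), if_neg (by omega), if_pos rfl]
  rw [bCoef_diag, bCoef_mid ν (by omega : i - 1 < i) h2]
  rw [show (i:ℝ) - ((i-1:ℕ):ℝ) = 1 by rw [Nat.cast_sub (by omega : 1 ≤ i)]; ring]
  ring

lemma qCoef_super (h1 : 1 ≤ i) (h2 : i + 2 ≤ N) :
    qCoef ν N i (i+1) = dd (3-ν) 2 - 2*dd (3-ν) 1 + 1 := by
  unfold qCoef
  rw [if_neg (by omega), if_neg (by omega), if_neg (by omega)]
  rw [bCoef_diag, bCoef_mid ν (by omega : i - 1 < i + 1) (by omega),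
      bCoef_mid ν (by omega : i < i + 1) (by omega)]
  rw [show ((i+1:ℕ):ℝ) - ((i-1:ℕ):ℝ) = 2 by
        rw [Nat.cast_sub (by omega : 1 ≤ i)]; push_cast; ring,
      show ((i+1:ℕ):ℝ) - (i:ℝ) = 1 by push_cast; ring]

lemma qCoef_far (h1 : i + 2 ≤ m) (h2 : m < N) (hi : 1 ≤ i) :
    qCoef ν N i m = dd (3-ν) ((m:ℝ)-i+1) - 2*dd (3-ν) ((m:ℝ)-i) + dd (3-ν) ((m:ℝ)-i-1) := by
  unfold qCoef
  rw [if_neg (by omega), if_neg (by omega), if_neg (by omega)]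
  rw [bCoef_mid ν (by omega : i - 1 < m) h2, bCoef_mid ν (by omega : i < m) h2,
      bCoef_mid ν (by omega : i + 1 < m) h2]
  rw [show (m:ℝ) - ((i-1:ℕ):ℝ) = (m:ℝ)-i+1 by rw [Nat.cast_sub (by omega : 1 ≤ i)]; ring,
      show (m:ℝ) - ((i+1:ℕ):ℝ) = (m:ℝ)-i-1 by push_cast; ring]

lemma qrow_eq (h1 : 1 ≤ i) (hiN : i + 1 ≤ N) (hm1 : 1 ≤ m) (hmN : m + 1 ≤ N) :
    qCoef ν N i m = pCoef ν (N - i) (N - m) := by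
  rcases Nat.lt_or_ge (m + 1) i with h | h
  · rw [qCoef_lt ν h, pCoef_ge ν (by omega)]
  rcases Nat.eq_or_lt_of_le h with h' | h'
  · -- m + 1 = i
    subst_vars
    rw [qCoef_sub,
        show N - m = (N - (m+1)) + 1 by omega, pCoef_super]
  rcases Nat.lt_or_ge m i with hmi | hmi
  · omega
  rcases Nat.eq_or_lt_of_le hmi with h'' | h''
  · -- m = i
    subst h''
    rw [qCoef_diag ν (by omega) (by omega), pCoef_diag ν (N - i) (by omega)]
  rcases Nat.eq_or_lt_of_le h'' with h3 | h3
  · -- m = i + 1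
    subst h3
    rw [qCoef_super ν h1 (by omega),
        show N - i = (N - (i+1)) + 1 by omega, pCoef_sub ν (N - (i+1)) (by omega)]
    ring
  · -- i + 2 ≤ m
    rw [qCoef_far ν (by omega) (by omega) h1, pCoef_far ν (by omega : 1 ≤ N - m) (by omega)]
    rw [show ((N-i:ℕ):ℝ) - ((N-m:ℕ):ℝ) - 1 = (m:ℝ)-i-1 by
          rw [Nat.cast_sub (by omega : i ≤ N), Nat.cast_sub (by omega : m ≤ N)]; ring,
        show ((N-i:ℕ):ℝ) - ((N-m:ℕ):ℝ) = (m:ℝ)-i by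
          rw [Nat.cast_sub (by omega : i ≤ N), Nat.cast_sub (by omega : m ≤ N)]; ring]
    ring

end Entries

section GSign
variable {ν : ℝ} {N i m : ℕ}

lemma g_diag_eq (hi : 1 ≤ i) (hiN : i + 1 ≤ N) :
    gCoef ν N i i = 2 * dd (3-ν) 1 - 4 := by
  unfold gCoef
  rw [pCoef_diag ν i hi, qCoef_diag ν hi (by omega)]
  ring

lemma g_diag_nonpos (hν1 : 1 < ν) (hν2 : ν ≤ 2) (hi : 1 ≤ i) (hiN : i + 1 ≤ N) :
    gCoef ν N i i ≤ 0 := by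
  rw [g_diag_eq hi hiN, dd_one_eq (by linarith : 1 ≤ 3 - ν)]
  have := two_rpow_le_four (r := 3 - ν) (by linarith)
  linarith

lemma g_near_val (hν1 : 1 < ν) (hν2 : ν ≤ 2) :
    0 ≤ dd (3-ν) 2 - 2 * dd (3-ν) 1 + 2 := by
  rw [dd_one_eq (by linarith : 1 ≤ 3 - ν), dd_two_eq]
  have := K1_ineq (r := 3 - ν) (by linarith) (by linarith)
  linarith

lemma g_offdiag_nonneg (hν1 : 1 < ν) (hν2 : ν ≤ 2) (hi : 1 ≤ i) (hiN : i + 1 ≤ N)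
    (hm : 1 ≤ m) (hmN : m + 1 ≤ N) (hne : m ≠ i) : 0 ≤ gCoef ν N i m := by
  have hr1 : (1:ℝ) ≤ 3 - ν := by linarith
  have hr2 : (3:ℝ) - ν ≤ 2 := by linarith
  unfold gCoef
  rcases Nat.lt_or_ge m i with hlt | hge
  · rcases Nat.eq_or_lt_of_le (Nat.succ_le_of_lt hlt) with he | hlt2
    · -- m + 1 = i
      rw [show i = m + 1 from he.symm, pCoef_sub ν m hm, qCoef_sub ν m]
      have := g_near_val (ν := ν) hν1 hν2
      linarith
    · -- m + 2 ≤ i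
      rw [pCoef_far ν hm (by omega), qCoef_lt ν (by omega)]
      have hx : (2:ℝ) ≤ (i:ℝ) - m := by
        have : ((m:ℕ):ℝ) + 2 ≤ ((i:ℕ):ℝ) := by exact_mod_cast (by omega : m + 2 ≤ i)
        linarith
      have := dd_second_diff_nonneg hr1 hr2 hx
      linarith
  · rcases Nat.eq_or_lt_of_le hge with he | hlt2
    · omega
    rcases Nat.eq_or_lt_of_le (Nat.succ_le_of_lt hlt2) with he2 | hlt3
    · -- m = i + 1
      rw [← he2, pCoef_super ν i, qCoef_super ν hi (by omega)]
      have := g_near_val (ν := ν) hν1 hν2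
      linarith
    · -- i + 2 ≤ m
      rw [pCoef_ge ν (by omega), qCoef_far ν (by omega) (by omega) hi]
      have hx : (2:ℝ) ≤ (m:ℝ) - i := by
        have : ((i:ℕ):ℝ) + 2 ≤ ((m:ℕ):ℝ) := by exact_mod_cast (by omega : i + 2 ≤ m)
        linarith
      have := dd_second_diff_nonneg hr1 hr2 hx
      linarith

/-- generic telescoping of second differences -/
lemma tele_second (v : ℕ → ℝ) : ∀ K, 1 ≤ K →
    ∑ s ∈ Finset.Icc 2 K, (v (s+1) - 2*v s + v (s-1)) = v (K+1) - v K - v 2 + v 1 := by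
  intro K
  induction K with
  | zero => omega
  | succ K ih =>
    intro _
    rcases Nat.eq_or_lt_of_le (by omega : 1 ≤ K + 1) with he | hlt
    · rw [← he]
      norm_num
    · have hK : 1 ≤ K := by omega
      rw [Finset.sum_Icc_succ_top (by omega : 2 ≤ K + 1), ih hK]
      have : K + 1 - 1 = K := by omega
      rw [this]
      ring

/-- The `W` sequence: second differences of `x^(3-ν)` at integer points. -/
noncomputable def WW (ν : ℝ) (s : ℕ) : ℝ := dd (3-ν) (s : ℝ)

lemma WW_antitone (hν1 : 1 < ν) (hν2 : ν ≤ 2) {s : ℕ} (hs : 1 ≤ s) :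
    WW ν (s+1) ≤ WW ν s := by
  have hr1 : (1:ℝ) ≤ 3 - ν := by linarith
  have hr2 : (3:ℝ) - ν ≤ 2 := by linarith
  have h1 : (1:ℝ) ≤ (s:ℝ) := by exact_mod_cast hs
  have h2 : (1:ℝ) ≤ ((s+1:ℕ):ℝ) := by push_cast; linarith
  have := dd_antitoneOn hr1 hr2 (Set.mem_Ici.mpr h1) (Set.mem_Ici.mpr h2)
    (by push_cast; linarith : (s:ℝ) ≤ ((s+1:ℕ):ℝ))
  exact this

lemma WW_one (hν2 : ν ≤ 2) : WW ν 1 = (2:ℝ)^(3-ν) - 2 := by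
  unfold WW
  rw [show ((1:ℕ):ℝ) = 1 by norm_num, dd_one_eq (by linarith : 1 ≤ 3 - ν)]

lemma WW_one_le (hν1 : 1 < ν) (hν2 : ν ≤ 2) : WW ν 1 ≤ 2 := by
  rw [WW_one hν2]
  have := two_rpow_le_four (r := 3 - ν) (by linarith)
  linarith

/-- Core partial row sum for `pCoef`. -/
lemma Psum_core (ν : ℝ) (a : ℕ) :
    ∑ m ∈ Finset.Icc 1 a, pCoef ν (a+2) m = WW ν (a+2) - WW ν (a+1) - WW ν 2 + WW ν 1 := by
  rw [← tele_second (WW ν) (a+1) (by omega)]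
  refine Finset.sum_bij' (fun m _ => a + 2 - m) (fun s _ => a + 2 - s) ?_ ?_ ?_ ?_ ?_
  · intro x hx
    simp only [Finset.mem_Icc] at hx ⊢
    omega
  · intro x hx
    simp only [Finset.mem_Icc] at hx ⊢
    omega
  · intro x hx
    simp only [Finset.mem_Icc] at hx
    show a + 2 - (a + 2 - x) = x
    omega
  · intro x hx
    simp only [Finset.mem_Icc] at hx
    show a + 2 - (a + 2 - x) = x
    omega
  · intro x hx
    simp only [Finset.mem_Icc] at hx
    rw [pCoef_far ν (by omega) (by omega)]
    unfold WW
    rw [show (a + 2 - x + 1 : ℕ) = a + 3 - x by omega]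
    rw [show ((a+2-x:ℕ):ℝ) = ((a+2:ℕ):ℝ) - x by rw [Nat.cast_sub (by omega)],
        show ((a+3-x:ℕ):ℝ) = ((a+2:ℕ):ℝ) - x + 1 by rw [Nat.cast_sub (by omega)]; push_cast; ring,
        show ((a+2-x-1:ℕ):ℝ) = ((a+2:ℕ):ℝ) - x - 1 by rw [show a+2-x-1 = a+1-x by omega, Nat.cast_sub (by omega)]; push_cast; ring]
    ring

end GSign

section RowSum
variable {ν : ℝ} {N i m : ℕ}

lemma WW_one_dd : WW ν 1 = dd (3-ν) 1 := by unfold WW; norm_num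

lemma WW_two_dd : WW ν 2 = dd (3-ν) 2 := by unfold WW; norm_num

lemma Psum (ν : ℝ) (a t : ℕ) (ht : 1 ≤ t) :
    ∑ m ∈ Finset.Icc 1 (a+t), pCoef ν (a+1) m
      = (if a = 0 then WW ν 1 - 1 else WW ν (a+1) - WW ν a) - (if t = 1 then 1 else 0) := by
  rcases a with _ | b
  · -- a = 0, i = 1
    rw [if_pos (rfl : (0:ℕ) = 0), Nat.zero_add]
    rcases Nat.eq_or_lt_of_le ht with he | hlt
    · rw [← he]
      rw [Finset.Icc_self, Finset.sum_singleton, pCoef_diag ν 1 (by omega), WW_one_dd,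
          if_pos rfl]
      ring
    · rw [if_neg (by omega)]
      have hz : ∀ x ∈ Finset.Icc 1 t, x ∉ Finset.Icc 1 2 → pCoef ν 1 x = 0 := by
        intro x hx hnx
        simp only [Finset.mem_Icc] at hx hnx
        exact pCoef_ge ν (by omega)
      rw [← Finset.sum_subset (Finset.Icc_subset_Icc_right (by omega)) hz]
      rw [show Finset.Icc (1:ℕ) 2 = {1, 2} by decide, Finset.sum_pair (by norm_num)]
      rw [pCoef_diag ν 1 (by omega), show pCoef ν 1 2 = 1 from pCoef_super ν 1, WW_one_dd]
      ring
  · -- a = b + 1, i = b + 2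
    rw [if_neg (by omega), show b + 1 + 1 = b + 2 from rfl]
    rcases Nat.eq_or_lt_of_le ht with he | hlt
    · rw [← he, if_pos rfl]
      rw [show b + 1 + 1 = b + 2 from rfl]
      rw [Finset.sum_Icc_succ_top (by omega : 1 ≤ b + 1 + 1),
          Finset.sum_Icc_succ_top (by omega : 1 ≤ b + 1),
          Psum_core ν b]
      rw [show pCoef ν (b+2) (b+1+1) = -2 + dd (3-ν) 1 from pCoef_diag ν (b+2) (by omega),
          pCoef_sub ν (b+1) (by omega), WW_one_dd, WW_two_dd]
      ring
    · rw [if_neg (by omega)]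
      have hz : ∀ x ∈ Finset.Icc 1 (b+1+t), x ∉ Finset.Icc 1 (b+3) → pCoef ν (b+2) x = 0 := by
        intro x hx hnx
        simp only [Finset.mem_Icc] at hx hnx
        exact pCoef_ge ν (by omega)
      rw [← Finset.sum_subset (Finset.Icc_subset_Icc_right (by omega)) hz]
      rw [show b + 3 = b + 2 + 1 from rfl,
          Finset.sum_Icc_succ_top (by omega : 1 ≤ b + 2 + 1),
          Finset.sum_Icc_succ_top (by omega : 1 ≤ b + 1 + 1),
          Finset.sum_Icc_succ_top (by omega : 1 ≤ b + 1),
          Psum_core ν b]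
      rw [show pCoef ν (b+2) (b+1+1) = -2 + dd (3-ν) 1 from pCoef_diag ν (b+2) (by omega),
          pCoef_sub ν (b+1) (by omega),
          show pCoef ν (b+2) (b+2+1) = 1 from pCoef_super ν (b+2),
          WW_one_dd, WW_two_dd]
      ring

lemma grow_nonpos (hν1 : 1 < ν) (hν2 : ν ≤ 2) (hi : 1 ≤ i) (hiN : i + 1 ≤ N) :
    ∑ m ∈ Finset.Icc 1 (N-1), gCoef ν N i m ≤ 0 := by
  obtain ⟨a, rfl⟩ : ∃ a, i = a + 1 := ⟨i - 1, by omega⟩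
  obtain ⟨t, ht1, rfl⟩ : ∃ t, 1 ≤ t ∧ N = a + 1 + t := ⟨N - (a+1), by omega, by omega⟩
  rw [show a + 1 + t - 1 = a + t by omega]
  unfold gCoef
  rw [Finset.sum_add_distrib]
  have hq : ∑ m ∈ Finset.Icc 1 (a+t), qCoef ν (a+1+t) (a+1) m
      = ∑ m ∈ Finset.Icc 1 (a+t), pCoef ν t m := by
    refine Finset.sum_bij' (fun m _ => a + 1 + t - m) (fun m _ => a + 1 + t - m) ?_ ?_ ?_ ?_ ?_
    · intro x hx; simp only [Finset.mem_Icc] at hx ⊢; omega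
    · intro x hx; simp only [Finset.mem_Icc] at hx ⊢; omega
    · intro x hx; simp only [Finset.mem_Icc] at hx
      show a + 1 + t - (a + 1 + t - x) = x
      omega
    · intro x hx; simp only [Finset.mem_Icc] at hx
      show a + 1 + t - (a + 1 + t - x) = x
      omega
    · intro x hx; simp only [Finset.mem_Icc] at hx
      rw [qrow_eq ν (by omega) (by omega) (by omega) (by omega)]
      rw [show a + 1 + t - (a + 1) = t by omega]
  rw [hq, Psum ν a t ht1]
  obtain ⟨u, rfl⟩ : ∃ u, t = u + 1 := ⟨t - 1, by omega⟩
  have := Psum ν u (a+1) (by omega)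
  rw [show u + (a + 1) = a + (u + 1) by omega] at this
  rw [this]
  have hW1 := WW_one_le hν1 hν2
  rcases Nat.eq_zero_or_pos a with ha | ha
  · subst ha
    rcases Nat.eq_zero_or_pos u with hu | hu
    · subst hu
      norm_num
      linarith
    · rw [if_pos rfl, if_neg (by omega), if_neg (by omega), if_pos (by norm_num)]
      have hmono := WW_antitone hν1 hν2 hu
      linarith
  · rcases Nat.eq_zero_or_pos u with hu | hu
    · subst hu
      rw [if_neg (by omega), if_pos (by norm_num), if_pos rfl, if_neg (by omega)]
      have hmono := WW_antitone hν1 hν2 ha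
      linarith
    · rw [if_neg (by omega), if_neg (by omega), if_neg (by omega), if_neg (by omega)]
      have hmono1 := WW_antitone hν1 hν2 ha
      have hmono2 := WW_antitone hν1 hν2 hu
      linarith

end RowSum


section Glue
variable {γ ν : ℝ}

lemma lCoef_nonneg (hγ1 : 0 < γ) (hγ2 : γ < 1) (s : ℕ) : 0 ≤ lCoef γ s := by
  unfold lCoef
  have h : (s:ℝ) ^ (1-γ) ≤ ((s:ℝ)+1) ^ (1-γ) :=
    Real.rpow_le_rpow (by positivity) (by linarith) (by linarith)
  linarith

lemma lCoef_zero_eq (hγ2 : γ < 1) : lCoef γ 0 = 1 := by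
  unfold lCoef
  rw [show ((0:ℕ):ℝ) = 0 by norm_num, Real.zero_rpow (by linarith : 1 - γ ≠ 0)]
  norm_num

lemma lCoef_antitone (hγ1 : 0 < γ) (hγ2 : γ < 1) (s : ℕ) : lCoef γ (s+1) ≤ lCoef γ s := by
  have hconc := Real.concaveOn_rpow (p := 1 - γ) (by linarith) (by linarith)
  have h := concaveOn_midpoint hconc (a := (s:ℝ)) (b := (s:ℝ)+2)
    (by simp) (by simp; positivity)
  have e : ((s:ℝ) + ((s:ℝ)+2))/2 = (s:ℝ)+1 := by ring
  rw [e] at h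
  unfold lCoef
  push_cast
  have e2 : (s:ℝ) + 1 + 1 = (s:ℝ) + 2 := by ring
  rw [e2]
  linarith

lemma kappa_neg (hν1 : 1 < ν) (hν2 : ν ≤ 2) : kappa ν < 0 := by
  have hπ := Real.pi_pos
  have h1 : Real.pi/2 < ν*Real.pi/2 := by nlinarith
  have h2 : ν*Real.pi/2 < Real.pi + Real.pi/2 := by nlinarith
  have hc := Real.cos_neg_of_pi_div_two_lt_of_lt h1 h2
  unfold kappa
  exact div_neg_of_pos_of_neg one_pos (by linarith)

lemma le_maxAbs2 (Nx Ny : ℕ) (v : ℕ → ℕ → ℝ) {i j : ℕ} (hi : i ≤ Nx) (hj : j ≤ Ny) :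
    |v i j| ≤ maxAbs2 Nx Ny v := by
  unfold maxAbs2
  exact Finset.le_sup' (f := fun p : ℕ × ℕ => |v p.1 p.2|) (b := (i, j))
    (Finset.mem_product.mpr ⟨Finset.mem_range.mpr (by omega), Finset.mem_range.mpr (by omega)⟩)

lemma maxAbs2_nonneg (Nx Ny : ℕ) (v : ℕ → ℕ → ℝ) : 0 ≤ maxAbs2 Nx Ny v :=
  le_trans (abs_nonneg (v 0 0)) (le_maxAbs2 Nx Ny v (by omega) (by omega))

lemma exists_maxAbs2 (Nx Ny : ℕ) (v : ℕ → ℕ → ℝ) :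
    ∃ i j, i ≤ Nx ∧ j ≤ Ny ∧ maxAbs2 Nx Ny v = |v i j| := by
  obtain ⟨p, hp, hpe⟩ := Finset.exists_mem_eq_sup'
    (Finset.nonempty_range_add_one.product Finset.nonempty_range_add_one)
    (fun p : ℕ × ℕ => |v p.1 p.2|)
  obtain ⟨hp1, hp2⟩ := Finset.mem_product.mp hp
  rw [Finset.mem_range] at hp1 hp2
  exact ⟨p.1, p.2, by omega, by omega, hpe⟩

end Glue

end AuxStability

/-- Theorem 3.5 (case `0 < γ < 1`): unconditional stability of the two-dimensional
implicit finite difference scheme. Here `ε k i j` denotes `ε^k_{i,j}`. -/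
theorem implicit_2d_stable (γ α β : ℝ) (hγ : γ ∈ Set.Ioo (0:ℝ) 1)
    (hα : α ∈ Set.Ioc (1:ℝ) 2) (hβ : β ∈ Set.Ioc (1:ℝ) 2)
    (Nx Ny Nt : ℕ) (hNx : 2 ≤ Nx) (hNy : 2 ≤ Ny) (hNt : 1 ≤ Nt)
    (τ Δx Δy : ℝ) (hτ : 0 < τ) (hΔx : 0 < Δx) (hΔy : 0 < Δy)
    (c d : ℕ → ℕ → ℕ → ℝ)
    (hc : ∀ i j k : ℕ, 1 ≤ i → i ≤ Nx - 1 → 1 ≤ j → j ≤ Ny - 1 → 1 ≤ k → k ≤ Nt →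
      0 ≤ c i j k ∧ 0 ≤ d i j k)
    (ω' ω'' : ℕ → ℕ → ℕ → ℝ)
    (hω : ∀ i j k : ℕ, 1 ≤ i → i ≤ Nx - 1 → 1 ≤ j → j ≤ Ny - 1 → 1 ≤ k → k ≤ Nt →
      ω' i j k = -(Real.Gamma (2 - γ) * τ ^ γ * kappa α * c i j k)
          / (Real.Gamma (4 - α) * Δx ^ α) ∧
      ω'' i j k = -(Real.Gamma (2 - γ) * τ ^ γ * kappa β * d i j k)
          / (Real.Gamma (4 - β) * Δy ^ β))
    (ε : ℕ → ℕ → ℕ → ℝ)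
    (hbc : ∀ k i j : ℕ, 1 ≤ k → k ≤ Nt → i ≤ Nx → j ≤ Ny →
      (i = 0 ∨ i = Nx ∨ j = 0 ∨ j = Ny) → ε k i j = 0)
    (hscheme : ∀ i j k : ℕ, 1 ≤ i → i ≤ Nx - 1 → 1 ≤ j → j ≤ Ny - 1 → k + 1 ≤ Nt →
      (1 - ω' i j (k + 1) * gCoef α Nx i i - ω'' i j (k + 1) * gCoef β Ny j j)
          * ε (k + 1) i j
        - ω' i j (k + 1)
          * ∑ m ∈ (Finset.range (Nx + 1)).erase i, gCoef α Nx i m * ε (k + 1) m j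
        - ω'' i j (k + 1)
          * ∑ m ∈ (Finset.range (Ny + 1)).erase j, gCoef β Ny j m * ε (k + 1) i m
      = (∑ s ∈ Finset.range k, (lCoef γ s - lCoef γ (s + 1)) * ε (k - s) i j)
        + lCoef γ k * ε 0 i j) :
    ∀ k : ℕ, k ≤ Nt → maxAbs2 Nx Ny (ε k) ≤ maxAbs2 Nx Ny (ε 0) := by
  obtain ⟨hγ1, hγ2⟩ := hγ
  obtain ⟨hα1, hα2⟩ := hα
  obtain ⟨hβ1, hβ2⟩ := hβ
  intro k
  induction k using Nat.strong_induction_on with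
  | _ k IH =>
  intro hk
  rcases k with _ | k
  · exact le_refl _
  · -- inductive step: k + 1 ≤ Nt
    have hE0 : 0 ≤ maxAbs2 Nx Ny (ε 0) := maxAbs2_nonneg Nx Ny (ε 0)
    obtain ⟨i, j, hi, hj, hval⟩ := exists_maxAbs2 Nx Ny (ε (k+1))
    rw [hval]
    by_cases hbd : i = 0 ∨ i = Nx ∨ j = 0 ∨ j = Ny
    · rw [hbc (k+1) i j (by omega) hk hi hj hbd]
      simpa using hE0
    · push_neg at hbd
      obtain ⟨hb1, hb2, hb3, hb4⟩ := hbd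
      have hi1 : 1 ≤ i := by omega
      have hi2 : i ≤ Nx - 1 := by omega
      have hj1 : 1 ≤ j := by omega
      have hj2 : j ≤ Ny - 1 := by omega
      -- nonnegativity of the weights
      obtain ⟨hw1, hw2⟩ := hω i j (k+1) hi1 hi2 hj1 hj2 (by omega) hk
      obtain ⟨hc1, hc2⟩ := hc i j (k+1) hi1 hi2 hj1 hj2 (by omega) hk
      have hΓγ : 0 < Real.Gamma (2 - γ) := Real.Gamma_pos_of_pos (by linarith)
      have hτγ : 0 < τ ^ γ := Real.rpow_pos_of_pos hτ γ
      have hA : 0 ≤ ω' i j (k+1) := by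
        rw [hw1]
        apply div_nonneg
        · rw [neg_nonneg,
            show Real.Gamma (2-γ) * τ^γ * kappa α * c i j (k+1)
              = (Real.Gamma (2-γ) * τ^γ) * (kappa α * c i j (k+1)) by ring]
          exact mul_nonpos_of_nonneg_of_nonpos (by positivity)
            (mul_nonpos_of_nonpos_of_nonneg (kappa_neg hα1 hα2).le hc1)
        · exact (mul_pos (Real.Gamma_pos_of_pos (by linarith))
            (Real.rpow_pos_of_pos hΔx α)).le
      have hB : 0 ≤ ω'' i j (k+1) := by
        rw [hw2]
        apply div_nonneg
        · rw [neg_nonneg,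
            show Real.Gamma (2-γ) * τ^γ * kappa β * d i j (k+1)
              = (Real.Gamma (2-γ) * τ^γ) * (kappa β * d i j (k+1)) by ring]
          exact mul_nonpos_of_nonneg_of_nonpos (by positivity)
            (mul_nonpos_of_nonpos_of_nonneg (kappa_neg hβ1 hβ2).le hc2)
        · exact (mul_pos (Real.Gamma_pos_of_pos (by linarith))
            (Real.rpow_pos_of_pos hΔy β)).le
      have heq := hscheme i j k hi1 hi2 hj1 hj2 hk
      set M := |ε (k+1) i j| with hM
      have hMnn : 0 ≤ M := abs_nonneg _
      have hMmax : ∀ a b : ℕ, a ≤ Nx → b ≤ Ny → |ε (k+1) a b| ≤ M := by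
        intro a b ha hb
        rw [← hval]
        exact le_maxAbs2 Nx Ny (ε (k+1)) ha hb
      -- key bound for the x-direction sum
      have key : ∀ (N' : ℕ) (μ : ℝ) (g : ℕ → ℕ → ℝ) (w : ℕ → ℝ),
          2 ≤ N' → 1 < μ → μ ≤ 2 →
          (∀ m, m ≤ N' → (m = 0 ∨ m = N') → w m = 0) →
          (∀ a, a ≤ N' → |w a| ≤ M) →
          ∀ i', 1 ≤ i' → i' + 1 ≤ N' → (∀ i'' m, g i'' m = gCoef μ N' i'' m) →
          |∑ m ∈ (Finset.range (N' + 1)).erase i', g i' m * w m|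
            ≤ -(g i' i') * M := by
        intro N' μ g w hN' hμ1 hμ2 hbc' hwM i' hi'1 hi'2 hg
        have hsum : ∑ m ∈ Finset.Icc 1 (N'-1), gCoef μ N' i' m ≤ 0 :=
          grow_nonpos hμ1 hμ2 hi'1 hi'2
        have himem : i' ∈ Finset.Icc 1 (N'-1) := Finset.mem_Icc.mpr ⟨hi'1, by omega⟩
        calc |∑ m ∈ (Finset.range (N' + 1)).erase i', g i' m * w m|
            ≤ ∑ m ∈ (Finset.range (N' + 1)).erase i', |g i' m * w m| :=
              Finset.abs_sum_le_sum_abs _ _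
          _ ≤ ∑ m ∈ (Finset.range (N' + 1)).erase i',
              (if 1 ≤ m ∧ m ≤ N' - 1 then gCoef μ N' i' m * M else 0) := by
              apply Finset.sum_le_sum
              intro m hm
              have hmr := Finset.mem_range.mp (Finset.mem_of_mem_erase hm)
              have hmne : m ≠ i' := Finset.ne_of_mem_erase hm
              by_cases hmint : 1 ≤ m ∧ m ≤ N' - 1
              · rw [if_pos hmint, hg, abs_mul]
                have hgnn : 0 ≤ gCoef μ N' i' m :=
                  g_offdiag_nonneg hμ1 hμ2 hi'1 hi'2 hmint.1 (by omega) hmne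
                rw [abs_of_nonneg hgnn]
                exact mul_le_mul_of_nonneg_left (hwM m (by omega)) hgnn
              · rw [if_neg hmint, hbc' m (by omega) (by omega)]
                simp
          _ = ∑ m ∈ (Finset.Icc 1 (N'-1)).erase i', gCoef μ N' i' m * M := by
              have hsub : (Finset.Icc 1 (N'-1)).erase i' ⊆ (Finset.range (N'+1)).erase i' := by
                apply Finset.erase_subset_erase
                intro x hx
                rw [Finset.mem_Icc] at hx
                exact Finset.mem_range.mpr (by omega)
              rw [← Finset.sum_subset hsub]
              · apply Finset.sum_congr rfl
                intro m hm
                have := Finset.mem_Icc.mp (Finset.mem_of_mem_erase hm)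
                rw [if_pos this]
              · intro m hm hnm
                rw [if_neg]
                intro hcon
                exact hnm (Finset.mem_erase.mpr ⟨Finset.ne_of_mem_erase hm,
                  Finset.mem_Icc.mpr hcon⟩)
          _ = (∑ m ∈ (Finset.Icc 1 (N'-1)).erase i', gCoef μ N' i' m) * M :=
              (Finset.sum_mul _ _ _).symm
          _ ≤ -(gCoef μ N' i' i') * M := by
              apply mul_le_mul_of_nonneg_right _ hMnn
              have := Finset.sum_erase_add (Finset.Icc 1 (N'-1)) (gCoef μ N' i') himem
              linarith
          _ = -(g i' i') * M := by rw [hg]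
      have keyx := key Nx α (gCoef α Nx) (fun m => ε (k+1) m j) hNx hα1 hα2
        (fun m hm hor => hbc (k+1) m j (by omega) hk hm hj (by tauto))
        (fun a ha => hMmax a j ha hj) i hi1 (by omega) (fun _ _ => rfl)
      have keyy := key Ny β (gCoef β Ny) (fun m => ε (k+1) i m) hNy hβ1 hβ2
        (fun m hm hor => hbc (k+1) i m (by omega) hk hi hm (by tauto))
        (fun b hb => hMmax i b hi hb) j hj1 (by omega) (fun _ _ => rfl)
      -- diagonal signs
      have hgx : gCoef α Nx i i ≤ 0 := g_diag_nonpos hα1 hα2 hi1 (by omega)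
      have hgy : gCoef β Ny j j ≤ 0 := g_diag_nonpos hβ1 hβ2 hj1 (by omega)
      -- bound on the right-hand side
      set R := (∑ s ∈ Finset.range k, (lCoef γ s - lCoef γ (s + 1)) * ε (k - s) i j)
        + lCoef γ k * ε 0 i j with hR
      have hRle : |R| ≤ maxAbs2 Nx Ny (ε 0) := by
        have hterm : ∀ s ∈ Finset.range k,
            |(lCoef γ s - lCoef γ (s + 1)) * ε (k - s) i j|
              ≤ (lCoef γ s - lCoef γ (s + 1)) * maxAbs2 Nx Ny (ε 0) := by
          intro s hs
          rw [abs_mul, abs_of_nonneg (by linarith [lCoef_antitone hγ1 hγ2 s] :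
            (0:ℝ) ≤ lCoef γ s - lCoef γ (s + 1))]
          apply mul_le_mul_of_nonneg_left _ (by linarith [lCoef_antitone hγ1 hγ2 s])
          calc |ε (k - s) i j| ≤ maxAbs2 Nx Ny (ε (k - s)) :=
                le_maxAbs2 Nx Ny (ε (k - s)) hi hj
            _ ≤ maxAbs2 Nx Ny (ε 0) := IH (k - s) (by omega) (by omega)
        calc |R| ≤ |∑ s ∈ Finset.range k, (lCoef γ s - lCoef γ (s + 1)) * ε (k - s) i j|
              + |lCoef γ k * ε 0 i j| := abs_add_le _ _
          _ ≤ (∑ s ∈ Finset.range k, (lCoef γ s - lCoef γ (s + 1)) * maxAbs2 Nx Ny (ε 0))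
              + lCoef γ k * maxAbs2 Nx Ny (ε 0) := by
              apply add_le_add
              · exact le_trans (Finset.abs_sum_le_sum_abs _ _) (Finset.sum_le_sum hterm)
              · rw [abs_mul, abs_of_nonneg (lCoef_nonneg hγ1 hγ2 k)]
                exact mul_le_mul_of_nonneg_left (le_maxAbs2 Nx Ny (ε 0) hi hj)
                  (lCoef_nonneg hγ1 hγ2 k)
          _ = (lCoef γ 0 - lCoef γ k) * maxAbs2 Nx Ny (ε 0)
              + lCoef γ k * maxAbs2 Nx Ny (ε 0) := by
              rw [← Finset.sum_mul, Finset.sum_range_sub' (fun s => lCoef γ s) k]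
          _ = maxAbs2 Nx Ny (ε 0) := by rw [lCoef_zero_eq hγ2]; ring
      -- combine
      set A := ω' i j (k+1) with hAdef
      set B := ω'' i j (k+1) with hBdef
      have hCoefnn : 0 ≤ 1 - A * gCoef α Nx i i - B * gCoef β Ny j j := by
        have h1 : A * gCoef α Nx i i ≤ 0 := mul_nonpos_of_nonneg_of_nonpos hA hgx
        have h2 : B * gCoef β Ny j j ≤ 0 := mul_nonpos_of_nonneg_of_nonpos hB hgy
        linarith
      have habs : (1 - A * gCoef α Nx i i - B * gCoef β Ny j j) * M
          ≤ |R| + A * (-(gCoef α Nx i i) * M) + B * (-(gCoef β Ny j j) * M) := by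
        have e1 : (1 - A * gCoef α Nx i i - B * gCoef β Ny j j) * M
            = |(1 - A * gCoef α Nx i i - B * gCoef β Ny j j) * ε (k+1) i j| := by
          rw [abs_mul, abs_of_nonneg hCoefnn, hM]
        rw [e1]
        have e2 : (1 - A * gCoef α Nx i i - B * gCoef β Ny j j) * ε (k+1) i j
            = R + A * (∑ m ∈ (Finset.range (Nx + 1)).erase i, gCoef α Nx i m * ε (k+1) m j)
              + B * (∑ m ∈ (Finset.range (Ny + 1)).erase j, gCoef β Ny j m * ε (k+1) i m) := by
          rw [hR]
          linarith [heq]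
        rw [e2]
        calc |R + A * _ + B * _| ≤ |R + A * _| + |B * _| := abs_add_le _ _
          _ ≤ |R| + |A * _| + |B * _| := by
              have := abs_add_le R (A * (∑ m ∈ (Finset.range (Nx + 1)).erase i,
                gCoef α Nx i m * ε (k+1) m j))
              linarith
          _ ≤ |R| + A * (-(gCoef α Nx i i) * M) + B * (-(gCoef β Ny j j) * M) := by
              rw [abs_mul, abs_mul, abs_of_nonneg hA, abs_of_nonneg hB]
              have t1 := mul_le_mul_of_nonneg_left keyx hA
              have t2 := mul_le_mul_of_nonneg_left keyy hB
              have e3 : -(gCoef α Nx i i) * M = -gCoef α Nx i i * M := by ring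
              have e4 : -(gCoef β Ny j j) * M = -gCoef β Ny j j * M := by ring
              rw [e3, e4]
              linarith
      have hfin : M ≤ |R| := by nlinarith [habs]
      exact le_trans hfin hRle
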